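/- Let a, b, κ be strictly positive real numbers and define h : ℝ → ℝ by h(w) = (a + w·b)² / (κ·(a + w²·b)). Then h(w) ≤ (a + b)/κ for every real w, with equality if and only if w = 1. In particular the unique global maximizer of h over ℝ is w = 1. -/

import Mathlib

/-- For delay bins unaffected by residual self-interference and partial
eclipsing, the optimal mismatched-filter weight is `w = 1` (matched filter):
`(a + wb)²/(κ(a + w²b)) ≤ (a + b)/κ` with equality iff `w = 1`. -/
theorem stmt5 (a b κ : ℝ) (ha : 0 < a) (hb : 0 < b) (hκ : 0 < κ)
    (h : ℝ → ℝ) (hh : ∀ w, h w = (a + w * b) ^ 2 / (κ * (a + w ^ 2 * b))) :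
    (∀ w : ℝ, h w ≤ (a + b) / κ) ∧
    (∀ w : ℝ, h w = (a + b) / κ ↔ w = 1) := by
  have hden : ∀ w : ℝ, 0 < a + w ^ 2 * b := fun w =>
    add_pos_of_pos_of_nonneg ha (by positivity)
  have key : ∀ w : ℝ, (a + b) * (a + w ^ 2 * b) - (a + w * b) ^ 2
      = a * b * (w - 1) ^ 2 := by intro w; ring
  constructor
  · intro w
    rw [hh w, div_le_div_iff₀ (by positivity) hκ]
    nlinarith [key w, mul_nonneg hκ.le (mul_nonneg (mul_nonneg ha.le hb.le) (sq_nonneg (w - 1)))]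
  · intro w
    rw [hh w]
    constructor
    · intro he
      have h2 : (a + w * b) ^ 2 * κ = (a + b) * (κ * (a + w ^ 2 * b)) := by
        field_simp at he
        linear_combination κ * he
      have h3 : a * b * (w - 1) ^ 2 = 0 := by nlinarith [key w]
      have h4 : (w - 1) ^ 2 = 0 := by
        have := mul_pos ha hb
        nlinarith
      have := pow_eq_zero_iff (n := 2) (by norm_num) |>.mp h4
      linarith
    · rintro rfl
      have : κ * (a + 1 ^ 2 * b) ≠ 0 := by positivity
      field_simp
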